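/- Ultra-discretization is functorial: for positive rational maps f : T₁ → T₂ and g : T₂ → T₃ between algebraic tori, the induced maps f̂ : X_*(T₁) → X_*(T₂) and ĝ : X_*(T₂) → X_*(T₃) on cocharacter lattices, defined by ⟨χ, f̂(ξ)⟩ = v(χ ∘ f ∘ ξ) for every character χ and cocharacter ξ, satisfy (g ∘ f)^ = ĝ ∘ f̂. -/

import Mathlib

set_option maxHeartbeats 1000000


open Finset Filter

/-- A function on the positive part of the torus `(ℂ^×)^m` (modeled on positive
real points) is a positive rational function if it is a ratio of two positive
linear combinations of characters (Laurent monomials). -/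
def IsPosRatFn {m : ℕ} (g : (Fin m → ℝ) → ℝ) : Prop :=
  ∃ (s t : Finset (Fin m → ℤ)) (a b : (Fin m → ℤ) → ℝ),
    s.Nonempty ∧ t.Nonempty ∧ (∀ χ ∈ s, 0 < a χ) ∧ (∀ χ ∈ t, 0 < b χ) ∧
    ∀ x : Fin m → ℝ, (∀ i, 0 < x i) →
      g x = (∑ χ ∈ s, a χ * ∏ i, x i ^ χ i) / (∑ χ ∈ t, b χ * ∏ i, x i ^ χ i)

/-- A positive rational map between tori. -/
def IsPosRatMap {m n : ℕ} (f : (Fin m → ℝ) → (Fin n → ℝ)) : Prop :=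
  (∀ x : Fin m → ℝ, (∀ i, 0 < x i) → ∀ j, 0 < f x j) ∧
  ∀ j : Fin n, IsPosRatFn (fun x => f x j)

/-- `φ : X_*(T) → X_*(T')` (a map of cocharacter lattices `ℤ^m → ℤ^n`) is the
ultra-discretization `f̂` of the positive map `f`:  for every cocharacter `ξ`
and every (coordinate) character `j`, `⟨χ_j, f̂(ξ)⟩` is the degree of the pole
at infinity of `χ_j ∘ f ∘ ξ`, i.e. `f((t^{ξ_i})_i)_j / t^{φ(ξ)_j}` tends to a
positive constant as `t → ∞`. -/
def IsHatOf {m n : ℕ} (f : (Fin m → ℝ) → (Fin n → ℝ))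
    (φ : (Fin m → ℤ) → (Fin n → ℤ)) : Prop :=
  ∀ (ξ : Fin m → ℤ) (j : Fin n), ∃ C : ℝ, 0 < C ∧
    Tendsto (fun t : ℝ => f (fun i => t ^ ξ i) j / t ^ φ ξ j) atTop (nhds C)

lemma zpow_sum' {ι : Type*} (s : Finset ι) (t : ℝ) (ht : t ≠ 0) (c : ι → ℤ) :
    t ^ (∑ i ∈ s, c i) = ∏ i ∈ s, t ^ c i := by
  induction s using Finset.cons_induction with
  | empty => simp
  | cons i s hi ih => simp [Finset.sum_cons, Finset.prod_cons, zpow_add₀ ht, ih]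

/-- Asymptotics of a monomial along a curve with prescribed asymptotics. -/
lemma monomial_asymp {n : ℕ} (u : ℝ → Fin n → ℝ) (η : Fin n → ℤ) (C : Fin n → ℝ)
    (hC : ∀ i, 0 < C i)
    (hu : ∀ i, Tendsto (fun t => u t i / t ^ η i) atTop (nhds (C i)))
    (χ : Fin n → ℤ) :
    Tendsto (fun t => (∏ i, u t i ^ χ i) / t ^ (∑ i, χ i * η i)) atTop
      (nhds (∏ i, C i ^ χ i)) := by
  have key : ∀ᶠ t : ℝ in atTop,
      ∏ i, (u t i / t ^ η i) ^ χ i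
        = (∏ i, u t i ^ χ i) / t ^ (∑ i, χ i * η i) := by
    filter_upwards [eventually_ne_atTop (0 : ℝ)] with t ht0
    simp only [div_zpow, Finset.prod_div_distrib]
    congr 1
    rw [zpow_sum' _ _ ht0]
    exact Finset.prod_congr rfl fun i _ => by rw [← zpow_mul, mul_comm]
  refine Tendsto.congr' key ?_
  exact tendsto_finset_prod _ fun i _ =>
    ((continuousAt_zpow₀ (C i) (χ i) (Or.inl (hC i).ne')).tendsto).comp (hu i)

/-- Asymptotics of a positive Laurent polynomial along a curve. -/
lemma poly_asymp {n : ℕ} (s : Finset (Fin n → ℤ)) (hs : s.Nonempty)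
    (a : (Fin n → ℤ) → ℝ) (ha : ∀ χ ∈ s, 0 < a χ)
    (u : ℝ → Fin n → ℝ) (η : Fin n → ℤ) (C : Fin n → ℝ)
    (hC : ∀ i, 0 < C i)
    (hu : ∀ i, Tendsto (fun t => u t i / t ^ η i) atTop (nhds (C i))) :
    ∃ L : ℝ, 0 < L ∧ Tendsto
      (fun t => (∑ χ ∈ s, a χ * ∏ i, u t i ^ χ i) /
        t ^ (s.sup' hs fun χ => ∑ i, χ i * η i)) atTop (nhds L) := by
  set d := s.sup' hs fun χ => ∑ i, χ i * η i with hd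
  obtain ⟨χ₀, hχ₀, hsup⟩ := Finset.exists_mem_eq_sup' hs fun χ => ∑ i, χ i * η i
  have hsup' : d = ∑ i, χ₀ i * η i := hsup
  have hle : ∀ χ ∈ s, (∑ i, χ i * η i) ≤ d := by
    intro χ hχ
    apply Finset.le_sup' (fun χ => ∑ i, χ i * η i) hχ
  clear_value d
  refine ⟨∑ χ ∈ s, (a χ * ∏ i, C i ^ χ i) *
      (if (∑ i, χ i * η i) = d then 1 else 0), ?_, ?_⟩
  · refine Finset.sum_pos' (fun χ hχ => ?_) ⟨χ₀, hχ₀, ?_⟩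
    · split_ifs with h
      · rw [mul_one]
        exact (mul_pos (ha χ hχ) (Finset.prod_pos fun i _ => zpow_pos (hC i) (χ i))).le
      · simp
    · rw [if_pos hsup'.symm, mul_one]
      exact mul_pos (ha χ₀ hχ₀) (Finset.prod_pos fun i _ => zpow_pos (hC i) _)
  · have hterm : ∀ χ ∈ s, Tendsto
        (fun t : ℝ => a χ * ((∏ i, u t i ^ χ i) / t ^ (∑ i, χ i * η i)) *
          t ^ ((∑ i, χ i * η i) - d)) atTop
        (nhds ((a χ * ∏ i, C i ^ χ i) *
          (if (∑ i, χ i * η i) = d then 1 else 0))) := by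
      intro χ hχ
      have hz : Tendsto (fun t : ℝ => t ^ ((∑ i, χ i * η i) - d)) atTop
          (nhds (if (∑ i, χ i * η i) = d then 1 else 0)) := by
        rcases eq_or_lt_of_le (hle χ hχ) with heq | hlt
        · rw [if_pos heq, heq, sub_self]
          simp only [zpow_zero]
          exact tendsto_const_nhds
        · rw [if_neg hlt.ne]
          exact tendsto_zpow_atTop_zero (sub_neg.mpr hlt)
      exact (tendsto_const_nhds.mul (monomial_asymp u η C hC hu χ)).mul hz
    refine Tendsto.congr' ?_ (tendsto_finset_sum s hterm)
    filter_upwards [eventually_ne_atTop (0 : ℝ)] with t ht0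
    rw [Finset.sum_div]
    refine Finset.sum_congr rfl fun χ hχ => ?_
    have h1 : (t : ℝ) ^ (∑ i, χ i * η i) ≠ 0 := zpow_ne_zero _ ht0
    have h2 : (t : ℝ) ^ d ≠ 0 := zpow_ne_zero _ ht0
    rw [zpow_sub₀ ht0]
    field_simp

/-- Asymptotics of a positive rational expression along a curve. -/
lemma ratio_asymp {n : ℕ} (s t : Finset (Fin n → ℤ)) (hs : s.Nonempty)
    (ht : t.Nonempty) (a b : (Fin n → ℤ) → ℝ)
    (ha : ∀ χ ∈ s, 0 < a χ) (hb : ∀ χ ∈ t, 0 < b χ)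
    (u : ℝ → Fin n → ℝ) (η : Fin n → ℤ) (C : Fin n → ℝ)
    (hC : ∀ i, 0 < C i)
    (hu : ∀ i, Tendsto (fun x => u x i / x ^ η i) atTop (nhds (C i))) :
    ∃ L : ℝ, 0 < L ∧ Tendsto
      (fun x => ((∑ χ ∈ s, a χ * ∏ i, u x i ^ χ i) /
          (∑ χ ∈ t, b χ * ∏ i, u x i ^ χ i)) /
        x ^ ((s.sup' hs fun χ => ∑ i, χ i * η i) -
          (t.sup' ht fun χ => ∑ i, χ i * η i))) atTop (nhds L) := by
  obtain ⟨L1, hL1, h1⟩ := poly_asymp s hs a ha u η C hC hu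
  obtain ⟨L2, hL2, h2⟩ := poly_asymp t ht b hb u η C hC hu
  refine ⟨L1 / L2, div_pos hL1 hL2, ?_⟩
  refine Tendsto.congr' ?_ (h1.div h2 hL2.ne')
  filter_upwards [eventually_ne_atTop (0 : ℝ)] with x hx0
  simp only [Pi.div_apply]
  rw [div_div_div_comm, zpow_sub₀ hx0]

/-- Uniqueness of the exponent of growth. -/
lemma exp_lt_absurd (A : ℝ → ℝ) (c d : ℤ) (L M : ℝ) (hL : 0 < L) (hM : 0 < M)
    (h1 : Tendsto (fun x => A x / x ^ c) atTop (nhds L))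
    (h2 : Tendsto (fun x => A x / x ^ d) atTop (nhds M))
    (hcd : c < d) : False := by
  have hz : Tendsto (fun x : ℝ => x ^ (d - c)) atTop atTop :=
    tendsto_zpow_atTop_atTop (by omega)
  have htop : Tendsto (fun x => A x / x ^ d * x ^ (d - c)) atTop atTop :=
    Tendsto.pos_mul_atTop hM h2 hz
  have heq : ∀ᶠ x : ℝ in atTop,
      A x / x ^ d * x ^ (d - c) = A x / x ^ c := by
    filter_upwards [eventually_ne_atTop (0 : ℝ)] with x hx0
    rw [zpow_sub₀ hx0]
    have hd : (x : ℝ) ^ d ≠ 0 := zpow_ne_zero _ hx0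
    field_simp
  exact (h1.not_tendsto (disjoint_nhds_atTop L)) (htop.congr' heq)

lemma exp_unique (A : ℝ → ℝ) (c d : ℤ) (L M : ℝ) (hL : 0 < L) (hM : 0 < M)
    (h1 : Tendsto (fun x => A x / x ^ c) atTop (nhds L))
    (h2 : Tendsto (fun x => A x / x ^ d) atTop (nhds M)) : c = d := by
  rcases lt_trichotomy c d with h | h | h
  · exact absurd (exp_lt_absurd A c d L M hL hM h1 h2 h) (by simp)
  · exact h
  · exact absurd (exp_lt_absurd A d c M L hM hL h2 h1 h) (by simp)

/-- Functoriality of ultra-discretization: `(g ∘ f)^ = ĝ ∘ f̂`. -/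
theorem stmt4 {m n k : ℕ} (f : (Fin m → ℝ) → (Fin n → ℝ))
    (g : (Fin n → ℝ) → (Fin k → ℝ))
    (hf : IsPosRatMap f) (hg : IsPosRatMap g)
    (φ : (Fin m → ℤ) → (Fin n → ℤ)) (ψ : (Fin n → ℤ) → (Fin k → ℤ))
    (hφ : IsHatOf f φ) (hψ : IsHatOf g ψ) :
    IsHatOf (g ∘ f) (ψ ∘ φ) := by
  intro ξ j
  obtain ⟨s, t, a, b, hs, ht, ha, hb, hrep⟩ := hg.2 j
  set η : Fin n → ℤ := φ ξ with hη
  set e : ℤ := (s.sup' hs fun χ => ∑ i, χ i * η i) -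
      (t.sup' ht fun χ => ∑ i, χ i * η i) with he
  -- Curve 1: the pure cocharacter x ↦ (x ^ η i)
  have hu1 : ∀ i, Tendsto (fun x : ℝ => (x : ℝ) ^ η i / x ^ η i) atTop
      (nhds (1 : ℝ)) := by
    intro i
    refine Tendsto.congr' ?_ tendsto_const_nhds
    filter_upwards [eventually_ne_atTop (0 : ℝ)] with x hx0
    rw [div_self (zpow_ne_zero _ hx0)]
  obtain ⟨L1, hL1, h1⟩ := ratio_asymp s t hs ht a b ha hb
    (fun x i => (x : ℝ) ^ η i) η (fun _ => 1) (fun _ => one_pos) hu1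
  have h1' : Tendsto (fun x : ℝ => g (fun i => (x : ℝ) ^ η i) j / x ^ e)
      atTop (nhds L1) := by
    refine Tendsto.congr' ?_ h1
    filter_upwards [eventually_gt_atTop (0 : ℝ)] with x hx0
    rw [← he, show g (fun i => (x : ℝ) ^ η i) j = _ from
      hrep (fun i => (x : ℝ) ^ η i) (fun i => zpow_pos hx0 _)]
  obtain ⟨M, hM, h2⟩ := hψ η j
  have hexp : e = ψ η j :=
    exp_unique (fun x : ℝ => g (fun i => (x : ℝ) ^ η i) j) e (ψ η j)
      L1 M hL1 hM h1' h2
  -- Curve 2: x ↦ f (x ^ ξ)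
  choose C hCpos hCten using fun i => hφ ξ i
  obtain ⟨L2, hL2, h3⟩ := ratio_asymp s t hs ht a b ha hb
    (fun x => f (fun i' => (x : ℝ) ^ ξ i')) η C hCpos hCten
  refine ⟨L2, hL2, ?_⟩
  refine Tendsto.congr' ?_ h3
  filter_upwards [eventually_gt_atTop (0 : ℝ)] with x hx0
  have hfpos : ∀ i, 0 < f (fun i' => (x : ℝ) ^ ξ i') i :=
    hf.1 _ (fun i' => zpow_pos hx0 _)
  rw [Function.comp_apply, show g (f fun i => (x : ℝ) ^ ξ i) j = _ from
    hrep _ hfpos]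
  simp only [Function.comp_apply, ← hη, ← hexp, he]
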